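/- Let Y be a Banach space with the Radon–Nikodým property and let g : ℝ → Y be pointwise Lipschitz at every point of a set B ⊂ ℝ (i.e., limsup_{s→t}‖g(s)−g(t)‖/|s−t| < ∞ for all t ∈ B). Then g is differentiable at almost every point of B. -/

import Mathlib

open MeasureTheory Set Metric Filter
open scoped NNReal ENNReal Topology

lemma my_clamp_lip (m M x y : ℝ) : |max m (min x M) - max m (min y M)| ≤ |x - y| := by
  have key : ∀ a b : ℝ, b ≤ a → 0 ≤ max m (min a M) - max m (min b M) ∧
      max m (min a M) - max m (min b M) ≤ a - b := by
    intro a b hba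
    simp only [max_def, min_def]
    split_ifs <;> constructor <;> linarith
  rcases le_total y x with h | h
  · obtain ⟨h1, h2⟩ := key x y h
    rw [abs_of_nonneg h1]
    exact h2.trans (le_abs_self _)
  · obtain ⟨h1, h2⟩ := key y x h
    rw [abs_sub_comm, abs_of_nonneg h1, abs_sub_comm]
    exact h2.trans (le_abs_self _)

lemma my_lip_extend {Y : Type*} [NormedAddCommGroup Y] [NormedSpace ℝ Y]
    {A : Set ℝ} (hA : IsClosed A) (hne : A.Nonempty) (hbb : BddBelow A) (hba : BddAbove A)
    {g : ℝ → Y} {K : ℝ} (hK : 0 ≤ K)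
    (hg : ∀ x ∈ A, ∀ y ∈ A, ‖g x - g y‖ ≤ K * |x - y|) :
    ∃ h : ℝ → Y, (∀ x y, ‖h x - h y‖ ≤ K * |x - y|) ∧ (∀ x ∈ A, h x = g x) := by
  set m := sInf A with hm
  set M := sSup A with hM
  have hmA : m ∈ A := hA.csInf_mem hne hbb
  have hMA : M ∈ A := hA.csSup_mem hne hba
  set a : ℝ → ℝ := fun z => sSup (A ∩ Iic z) with ha
  set b : ℝ → ℝ := fun z => sInf (A ∩ Ici z) with hb
  have hAm : ∀ t ∈ A, m ≤ t := fun t ht => csInf_le hbb ht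
  have hAM : ∀ t ∈ A, t ≤ M := fun t ht => le_csSup hba ht
  have haS : ∀ z, m ≤ z → (a z ∈ A ∧ a z ≤ z ∧ ∀ w ∈ A, w ≤ z → w ≤ a z) := by
    intro z hz
    have hne' : (A ∩ Iic z).Nonempty := ⟨m, hmA, hz⟩
    have hbdd : BddAbove (A ∩ Iic z) := ⟨z, fun w hw => hw.2⟩
    have hmem := (hA.inter isClosed_Iic).csSup_mem hne' hbdd
    exact ⟨hmem.1, hmem.2, fun w hw hwz => le_csSup hbdd ⟨hw, hwz⟩⟩
  have hbS : ∀ z, z ≤ M → (b z ∈ A ∧ z ≤ b z ∧ ∀ w ∈ A, z ≤ w → b z ≤ w) := by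
    intro z hz
    have hne' : (A ∩ Ici z).Nonempty := ⟨M, hMA, hz⟩
    have hbdd : BddBelow (A ∩ Ici z) := ⟨z, fun w hw => hw.2⟩
    have hmem := (hA.inter isClosed_Ici).csInf_mem hne' hbdd
    exact ⟨hmem.1, hmem.2, fun w hw hwz => csInf_le hbdd ⟨hw, hwz⟩⟩
  set H : ℝ → Y := fun z => g (a z) + ((z - a z) / (b z - a z)) • (g (b z) - g (a z)) with hH
  have haA : ∀ t ∈ A, a t = t := by
    intro t ht
    obtain ⟨h1, h2, h3⟩ := haS t (hAm t ht)
    exact le_antisymm h2 (h3 t ht le_rfl)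
  have hbA : ∀ t ∈ A, b t = t := by
    intro t ht
    obtain ⟨h1, h2, h3⟩ := hbS t (hAM t ht)
    exact le_antisymm (h3 t ht le_rfl) h2
  have hHA : ∀ t ∈ A, H t = g t := by
    intro t ht
    simp only [hH, haA t ht, hbA t ht, sub_self, zero_div, zero_smul, add_zero]
  have hgA : ∀ x ∈ A, ∀ y ∈ A, y ≤ x → ‖g x - g y‖ ≤ K * (x - y) := by
    intro x hx y hy hyx
    have := hg x hx y hy
    rwa [abs_of_nonneg (by linarith)] at this
  -- right estimate : from x to b x
  have right_est : ∀ x, m ≤ x → x ≤ M → ‖H (b x) - H x‖ ≤ K * (b x - x) := by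
    intro x hmx hxM
    obtain ⟨haxA, hax_le, hax_max⟩ := haS x hmx
    obtain ⟨hbxA, hbx_ge, hbx_min⟩ := hbS x hxM
    rcases eq_or_lt_of_le (hax_le.trans hbx_ge) with heq | hlt
    · have hxb : b x = x := le_antisymm (heq ▸ hax_le) hbx_ge
      rw [hxb]
      simp
    · have hD : (0:ℝ) < b x - a x := by linarith
      have hkey : H (b x) - H x = ((b x - x) / (b x - a x)) • (g (b x) - g (a x)) := by
        rw [hHA _ hbxA]
        simp only [hH]
        have h1 : (b x - x) / (b x - a x) = 1 - (x - a x) / (b x - a x) := by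
          field_simp; ring
        rw [h1, sub_smul, one_smul]
        abel
      rw [hkey, norm_smul, Real.norm_eq_abs,
        abs_of_nonneg (div_nonneg (by linarith) hD.le)]
      have hv : ‖g (b x) - g (a x)‖ ≤ K * (b x - a x) := hgA _ hbxA _ haxA (by linarith)
      calc (b x - x) / (b x - a x) * ‖g (b x) - g (a x)‖
          ≤ (b x - x) / (b x - a x) * (K * (b x - a x)) := by
            exact mul_le_mul_of_nonneg_left hv (div_nonneg (by linarith) hD.le)
        _ = K * (b x - x) := by field_simp
  have left_est : ∀ y, m ≤ y → y ≤ M → ‖H y - H (a y)‖ ≤ K * (y - a y) := by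
    intro y hmy hyM
    obtain ⟨hayA, hay_le, hay_max⟩ := haS y hmy
    obtain ⟨hbyA, hby_ge, hby_min⟩ := hbS y hyM
    rcases eq_or_lt_of_le (hay_le.trans hby_ge) with heq | hlt
    · have hya : a y = y := le_antisymm hay_le (heq ▸ hby_ge)
      rw [hya]
      simp
    · have hD : (0:ℝ) < b y - a y := by linarith
      have hkey : H y - H (a y) = ((y - a y) / (b y - a y)) • (g (b y) - g (a y)) := by
        rw [hHA _ hayA]
        simp only [hH]
        abel
      rw [hkey, norm_smul, Real.norm_eq_abs,
        abs_of_nonneg (div_nonneg (by linarith) hD.le)]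
      have hv : ‖g (b y) - g (a y)‖ ≤ K * (b y - a y) := hgA _ hbyA _ hayA (by linarith)
      calc (y - a y) / (b y - a y) * ‖g (b y) - g (a y)‖
          ≤ (y - a y) / (b y - a y) * (K * (b y - a y)) := by
            exact mul_le_mul_of_nonneg_left hv (div_nonneg (by linarith) hD.le)
        _ = K * (y - a y) := by field_simp
  have key : ∀ x y, m ≤ x → x ≤ y → y ≤ M → ‖H y - H x‖ ≤ K * (y - x) := by
    intro x y hmx hxy hyM
    have hmy : m ≤ y := hmx.trans hxy
    have hxM : x ≤ M := hxy.trans hyM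
    obtain ⟨haxA, hax_le, hax_max⟩ := haS x hmx
    obtain ⟨hayA, hay_le, hay_max⟩ := haS y hmy
    obtain ⟨hbxA, hbx_ge, hbx_min⟩ := hbS x hxM
    obtain ⟨hbyA, hby_ge, hby_min⟩ := hbS y hyM
    by_cases hEx : (A ∩ Icc x y).Nonempty
    · obtain ⟨z, hzA, hzx, hzy⟩ := hEx
      have hpz : b x ≤ z := hbx_min z hzA hzx
      have hzq : z ≤ a y := hay_max z hzA hzy
      have h1 : ‖H (b x) - H x‖ ≤ K * (b x - x) := right_est x hmx hxM
      have h2 : ‖H y - H (a y)‖ ≤ K * (y - a y) := left_est y hmy hyM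
      have h3 : ‖H (a y) - H (b x)‖ ≤ K * (a y - b x) := by
        rw [hHA _ hayA, hHA _ hbxA]
        exact hgA _ hayA _ hbxA (by linarith)
      have hdec : H y - H x = (H y - H (a y)) + (H (a y) - H (b x)) + (H (b x) - H x) := by
        abel
      rw [hdec]
      calc ‖H y - H (a y) + (H (a y) - H (b x)) + (H (b x) - H x)‖
          ≤ ‖H y - H (a y)‖ + ‖H (a y) - H (b x)‖ + ‖H (b x) - H x‖ := norm_add₃_le
        _ ≤ K * (y - a y) + K * (a y - b x) + K * (b x - x) := by
            exact add_le_add (add_le_add h2 h3) h1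
        _ = K * (y - x) := by ring
    · have hayx : a y ≤ x := by
        by_contra hcon
        push_neg at hcon
        exact hEx ⟨a y, hayA, hcon.le, hay_le⟩
      have hybx : y < b x := by
        by_contra hcon
        push_neg at hcon
        exact hEx ⟨b x, hbxA, hbx_ge, hcon⟩
      have haa : a x = a y :=
        le_antisymm (hay_max _ haxA (hax_le.trans hxy)) (hax_max _ hayA hayx)
      have hbb' : b x = b y :=
        le_antisymm (hbx_min _ hbyA (hxy.trans hby_ge)) (hby_min _ hbxA hybx.le)
      have hD : (0:ℝ) < b x - a x := by linarith
      have hkey : H y - H x = ((y - x) / (b x - a x)) • (g (b x) - g (a x)) := by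
        simp only [hH, ← haa, ← hbb']
        rw [add_sub_add_left_eq_sub, ← sub_smul, div_sub_div_same]
        congr 2
        ring
      rw [hkey, norm_smul, Real.norm_eq_abs,
        abs_of_nonneg (div_nonneg (by linarith) hD.le)]
      have hv : ‖g (b x) - g (a x)‖ ≤ K * (b x - a x) := hgA _ hbxA _ haxA (by linarith)
      calc (y - x) / (b x - a x) * ‖g (b x) - g (a x)‖
          ≤ (y - x) / (b x - a x) * (K * (b x - a x)) := by
            exact mul_le_mul_of_nonneg_left hv (div_nonneg (by linarith) hD.le)
        _ = K * (y - x) := by field_simp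
  refine ⟨fun x => H (max m (min x M)), ?_, ?_⟩
  · intro x y
    set u := max m (min x M) with hu
    set v := max m (min y M) with hv
    have hum : m ≤ u := le_max_left _ _
    have hvm : m ≤ v := le_max_left _ _
    have huM : u ≤ M := max_le (hAM m hmA) (min_le_right _ _)
    have hvM : v ≤ M := max_le (hAM m hmA) (min_le_right _ _)
    have hcl : |u - v| ≤ |x - y| := my_clamp_lip m M x y
    rcases le_total u v with h | h
    · rw [norm_sub_rev]
      calc ‖H v - H u‖ ≤ K * (v - u) := key u v hum h hvM
        _ ≤ K * |x - y| := by
            apply mul_le_mul_of_nonneg_left _ hK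
            calc v - u ≤ |u - v| := by rw [abs_sub_comm]; exact le_abs_self _
              _ ≤ |x - y| := hcl
    · calc ‖H u - H v‖ ≤ K * (u - v) := key v u hvm h huM
        _ ≤ K * |x - y| := by
            apply mul_le_mul_of_nonneg_left _ hK
            calc u - v ≤ |u - v| := le_abs_self _
              _ ≤ |x - y| := hcl
  · intro x hx
    show H (max m (min x M)) = g x
    have h1 : min x M = x := min_eq_left (hAM x hx)
    have h2 : max m x = x := max_eq_right (hAm x hx)
    rw [h1, h2]
    exact hHA x hx

lemma my_core {Y : Type*} [NormedAddCommGroup Y] [NormedSpace ℝ Y]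
    {g h : ℝ → Y} {E : Set ℝ} {C ε : ℝ} (hC : 0 ≤ C) (hε : 0 < ε)
    (hEq : ∀ x ∈ E, h x = g x)
    (hptw : ∀ t' ∈ E, ∀ s : ℝ, |s - t'| < ε → ‖g s - g t'‖ ≤ C * |s - t'|)
    {t : ℝ} (htE : t ∈ E)
    (hdiff : DifferentiableAt ℝ h t)
    (hdens : Tendsto (fun r => volume (E ∩ closedBall t r) / volume (closedBall t r))
      (𝓝[>] 0) (𝓝 1)) :
    DifferentiableAt ℝ g t := by
  set d := deriv h t with hd_def
  have hd : HasDerivAt h d t := hdiff.hasDerivAt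
  suffices Hg : HasDerivAt g d t from Hg.differentiableAt
  rw [hasDerivAt_iff_isLittleO] at hd ⊢
  rw [Asymptotics.isLittleO_iff] at hd ⊢
  intro η hη
  set lam := min 1 (η / (2 * (C + ‖d‖ + 1))) with hlam_def
  have hCd : (0:ℝ) < C + ‖d‖ + 1 := by positivity
  have hlam_pos : 0 < lam := lt_min one_pos (by positivity)
  have hlam1 : lam ≤ 1 := min_le_left _ _
  have h1lam : (0:ℝ) < 1 + lam := by positivity
  have hlam2 : lam * (C + ‖d‖ + 1) ≤ η / 2 := by
    calc lam * (C + ‖d‖ + 1) ≤ (η / (2 * (C + ‖d‖ + 1))) * (C + ‖d‖ + 1) :=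
          mul_le_mul_of_nonneg_right (min_le_right _ _) hCd.le
      _ = η / 2 := by field_simp
  have hη4 : (0:ℝ) < η / 4 := by positivity
  obtain ⟨δ₁, hδ₁pos, hδ₁⟩ := Metric.eventually_nhds_iff.1 (hd hη4)
  have hofr_pos : (0:ℝ≥0∞) ≠ ENNReal.ofReal (lam / (1 + lam)) := by
    symm
    simp only [ne_eq, ENNReal.ofReal_eq_zero, not_le]
    positivity
  have hlt : (1 : ℝ≥0∞) - ENNReal.ofReal (lam / (1 + lam)) < 1 :=
    ENNReal.sub_lt_self ENNReal.one_ne_top one_ne_zero (Ne.symm hofr_pos)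
  have hevent := hdens.eventually (eventually_gt_nhds hlt)
  obtain ⟨u, hu0, hu⟩ := (mem_nhdsGT_iff_exists_Ioo_subset' (by norm_num : (0:ℝ) < 1)).1 hevent
  rw [mem_Ioi] at hu0
  set δ := min (δ₁ / (1 + lam)) (min (u / (1 + lam) / 2) (ε / (1 + lam))) with hδ_def
  have hδpos : 0 < δ := by
    apply lt_min (by positivity) (lt_min (by positivity) (by positivity))
  rw [Metric.eventually_nhds_iff]
  refine ⟨δ, hδpos, fun s hs => ?_⟩
  rcases eq_or_ne s t with rfl | hst
  · simp
  set r := |s - t| with hr_def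
  have hr0 : 0 < r := abs_pos.2 (sub_ne_zero.2 hst)
  have hrδ : r < δ := by rwa [Real.dist_eq] at hs
  have hrδ₁ : (1 + lam) * r < δ₁ := by
    have : r < δ₁ / (1 + lam) := hrδ.trans_le (min_le_left _ _)
    calc (1 + lam) * r < (1 + lam) * (δ₁ / (1 + lam)) := by
          exact mul_lt_mul_of_pos_left this h1lam
      _ = δ₁ := by field_simp
  have hrε : lam * r < ε := by
    have h1 : r < ε / (1 + lam) := hrδ.trans_le ((min_le_right _ _).trans (min_le_right _ _))
    have h2 : (1 + lam) * r < ε := by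
      calc (1 + lam) * r < (1 + lam) * (ε / (1 + lam)) := mul_lt_mul_of_pos_left h1 h1lam
        _ = ε := by field_simp
    nlinarith
  -- find a point of E close to s
  have hs' : (E ∩ closedBall s (lam * r)).Nonempty := by
    by_contra hcon
    rw [not_nonempty_iff_eq_empty] at hcon
    set R := (1 + lam) * r with hR_def
    have hR0 : 0 < R := by positivity
    have hRu : R < u := by
      have h1 : r < u / (1 + lam) / 2 := hrδ.trans_le ((min_le_right _ _).trans (min_le_left _ _))
      calc R = (1 + lam) * r := rfl
        _ < (1 + lam) * (u / (1 + lam) / 2) := mul_lt_mul_of_pos_left h1 h1lam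
        _ = u / 2 := by field_simp
        _ < u := by linarith
    have hball : closedBall s (lam * r) ⊆ closedBall t R := by
      apply closedBall_subset_closedBall'
      rw [Real.dist_eq, ← hr_def]
      linarith
    have hsubset : E ∩ closedBall t R ⊆ closedBall t R \ closedBall s (lam * r) := by
      rintro w ⟨hwE, hwB⟩
      refine ⟨hwB, fun hw => ?_⟩
      have : w ∈ E ∩ closedBall s (lam * r) := ⟨hwE, hw⟩
      rw [hcon] at this
      exact this
    have hm1 : volume (E ∩ closedBall t R) ≤
        volume (closedBall t R) - volume (closedBall s (lam * r)) := by
      refine (measure_mono hsubset).trans_eq ?_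
      exact measure_diff hball measurableSet_closedBall.nullMeasurableSet
        (by rw [Real.volume_closedBall]; exact ENNReal.ofReal_ne_top)
    have hratio_le : volume (E ∩ closedBall t R) / volume (closedBall t R)
        ≤ 1 - ENNReal.ofReal (lam / (1 + lam)) := by
      calc volume (E ∩ closedBall t R) / volume (closedBall t R)
          ≤ (ENNReal.ofReal (2 * R) - ENNReal.ofReal (2 * (lam * r))) / ENNReal.ofReal (2 * R) := by
            rw [Real.volume_closedBall, Real.volume_closedBall] at hm1
            rw [Real.volume_closedBall]
            exact ENNReal.div_le_div_right hm1 _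
        _ = ENNReal.ofReal (2 * R - 2 * (lam * r)) / ENNReal.ofReal (2 * R) := by
            rw [ENNReal.ofReal_sub _ (by positivity)]
        _ = ENNReal.ofReal ((2 * R - 2 * (lam * r)) / (2 * R)) := by
            rw [ENNReal.ofReal_div_of_pos (by positivity)]
        _ = ENNReal.ofReal (1 - lam / (1 + lam)) := by
            congr 1
            rw [hR_def]
            field_simp
        _ = 1 - ENNReal.ofReal (lam / (1 + lam)) := by
            rw [ENNReal.ofReal_sub _ (by positivity), ENNReal.ofReal_one]
    have hratio_gt := hu ⟨hR0, hRu⟩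
    exact absurd hratio_le (not_le.2 hratio_gt)
  obtain ⟨s', hs'E, hs'B⟩ := hs'
  have hds' : |s - s'| ≤ lam * r := by
    rw [abs_sub_comm, ← Real.dist_eq]
    exact mem_closedBall.1 hs'B
  have hs't : |s' - t| ≤ (1 + lam) * r := by
    calc |s' - t| ≤ |s' - s| + |s - t| := abs_sub_le s' s t
      _ ≤ lam * r + r := by
          rw [abs_sub_comm]
          exact add_le_add hds' le_rfl
      _ = (1 + lam) * r := by ring
  have hb1 : ‖g s - g s'‖ ≤ C * (lam * r) := by
    have hlt' : |s - s'| < ε := lt_of_le_of_lt (le_of_eq rfl) (lt_of_le_of_lt hds' hrε)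
    exact (hptw s' hs'E s hlt').trans (mul_le_mul_of_nonneg_left hds' hC)
  have hb2 : ‖h s' - h t - (s' - t) • d‖ ≤ η / 4 * ((1 + lam) * r) := by
    have := hδ₁ (show dist s' t < δ₁ by rw [Real.dist_eq]; exact lt_of_le_of_lt hs't hrδ₁)
    refine this.trans ?_
    apply mul_le_mul_of_nonneg_left _ hη4.le
    rw [Real.norm_eq_abs]
    exact hs't
  have hb3 : ‖(s' - s) • d‖ ≤ lam * r * ‖d‖ := by
    rw [norm_smul, Real.norm_eq_abs]
    apply mul_le_mul_of_nonneg_right _ (norm_nonneg d)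
    rw [abs_sub_comm]
    exact hds'
  have hdecomp : g s - g t - (s - t) • d =
      (g s - g s') + (h s' - h t - (s' - t) • d) + (s' - s) • d := by
    rw [hEq s' hs'E, hEq t htE, sub_smul, sub_smul, sub_smul]
    abel
  rw [Real.norm_eq_abs, ← hr_def, hdecomp]
  calc ‖g s - g s' + (h s' - h t - (s' - t) • d) + (s' - s) • d‖
      ≤ ‖g s - g s'‖ + ‖h s' - h t - (s' - t) • d‖ + ‖(s' - s) • d‖ := norm_add₃_le
    _ ≤ C * (lam * r) + η / 4 * ((1 + lam) * r) + lam * r * ‖d‖ :=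
        add_le_add (add_le_add hb1 hb2) hb3
    _ ≤ η * r := by
        nlinarith [mul_le_mul_of_nonneg_right hlam2 hr0.le, mul_pos hlam_pos hr0,
          mul_le_mul_of_nonneg_right (mul_le_mul_of_nonneg_left hlam1 hη4.le) hr0.le]

lemma my_piece {Y : Type*} [NormedAddCommGroup Y] [NormedSpace ℝ Y] [CompleteSpace Y]
    (hRNP : ∀ (h : ℝ → Y) (C : ℝ≥0), LipschitzWith C h →
      ∀ᵐ t : ℝ ∂volume, DifferentiableAt ℝ h t)
    (g : ℝ → Y) {E : Set ℝ} {C ε : ℝ} (hC : 0 ≤ C) (hε : 0 < ε)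
    (hEclosed : IsClosed E) (hbb : BddBelow E) (hba : BddAbove E)
    (hptw : ∀ t ∈ E, ∀ s : ℝ, |s - t| < ε → ‖g s - g t‖ ≤ C * |s - t|)
    (hlip : ∀ x ∈ E, ∀ y ∈ E, ‖g x - g y‖ ≤ C * |x - y|) :
    volume {t | t ∈ E ∧ ¬ DifferentiableAt ℝ g t} = 0 := by
  rcases E.eq_empty_or_nonempty with hE | hEne
  · rw [hE]
    simp
  obtain ⟨h, hLip, hEqn⟩ := my_lip_extend hEclosed hEne hbb hba hC hlip
  have hlw : LipschitzWith C.toNNReal h := by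
    apply LipschitzWith.of_dist_le_mul
    intro x y
    rw [dist_eq_norm, Real.dist_eq, Real.coe_toNNReal _ hC]
    exact hLip x y
  have hae := hRNP h C.toNNReal hlw
  have hEmeas : MeasurableSet E := hEclosed.measurableSet
  have main : ∀ᵐ t ∂(volume.restrict E), DifferentiableAt ℝ g t := by
    filter_upwards [Besicovitch.ae_tendsto_measure_inter_div volume E,
      ae_restrict_of_ae hae, ae_restrict_mem hEmeas] with t hdens hdiff htE
    exact my_core hC hε hEqn hptw htE hdiff hdens
  have h0 : volume.restrict E {t | ¬ DifferentiableAt ℝ g t} = 0 := ae_iff.1 main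
  rw [Measure.restrict_apply' hEmeas] at h0
  have hset : {t | t ∈ E ∧ ¬ DifferentiableAt ℝ g t} =
      {t | ¬ DifferentiableAt ℝ g t} ∩ E := by
    ext t
    simp [and_comm]
  rw [hset]
  exact h0

theorem stepanov_for_RNP
    {Y : Type*} [NormedAddCommGroup Y] [NormedSpace ℝ Y] [CompleteSpace Y]
    (hRNP : ∀ (h : ℝ → Y) (C : ℝ≥0), LipschitzWith C h →
      ∀ᵐ t : ℝ ∂volume, DifferentiableAt ℝ h t)
    (g : ℝ → Y) (B : Set ℝ)
    (hg : ∀ t ∈ B, ∃ C : ℝ, ∃ δ > (0:ℝ), ∀ s : ℝ, |s - t| < δ →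
      ‖g s - g t‖ ≤ C * |s - t|) :
    volume {t : ℝ | t ∈ B ∧ ¬ DifferentiableAt ℝ g t} = 0 := by
  set D : ℕ → Set ℝ := fun n =>
    {t | ∀ s : ℝ, |s - t| < 1 / ((n : ℝ) + 1) → ‖g s - g t‖ ≤ ((n : ℝ) + 1) * |s - t|} with hD
  set c : ℕ → ℝ := fun n => 1 / (2 * ((n : ℝ) + 1)) with hc
  have hn1 : ∀ n : ℕ, (0:ℝ) < (n : ℝ) + 1 := fun n => by positivity
  have hcpos : ∀ n, 0 < c n := fun n => by
    simp only [hc]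
    positivity
  set E : ℕ → ℤ → Set ℝ := fun n k =>
    D n ∩ Icc ((k : ℝ) * c n) (((k : ℝ) + 1) * c n) with hE
  have hDclosed : ∀ n, IsClosed (D n) := by
    intro n
    apply IsSeqClosed.isClosed
    intro u t hu hut s hs
    have h1 : Tendsto (fun k => |s - u k|) atTop (𝓝 |s - t|) := (hut.const_sub s).abs
    have h2 : Tendsto (fun k => |t - u k|) atTop (𝓝 0) := by
      have := (hut.const_sub t).abs
      rwa [sub_self, abs_zero] at this
    have hev1 : ∀ᶠ k in atTop, |s - u k| < 1 / ((n : ℝ) + 1) :=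
      h1.eventually (eventually_lt_nhds hs)
    have hev2 : ∀ᶠ k in atTop, |t - u k| < 1 / ((n : ℝ) + 1) :=
      h2.eventually (eventually_lt_nhds (by positivity))
    have hev : ∀ᶠ k in atTop,
        ‖g s - g t‖ ≤ ((n : ℝ) + 1) * (|s - u k| + |t - u k|) := by
      filter_upwards [hev1, hev2] with k hk1 hk2
      have hb1 : ‖g s - g (u k)‖ ≤ ((n : ℝ) + 1) * |s - u k| := hu k s hk1
      have hb2 : ‖g t - g (u k)‖ ≤ ((n : ℝ) + 1) * |t - u k| := hu k t hk2
      calc ‖g s - g t‖ ≤ ‖g s - g (u k)‖ + ‖g (u k) - g t‖ := norm_sub_le_norm_sub_add_norm_sub _ _ _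
        _ ≤ ((n : ℝ) + 1) * |s - u k| + ((n : ℝ) + 1) * |t - u k| := by
            rw [norm_sub_rev (g (u k)) (g t)]
            exact add_le_add hb1 hb2
        _ = ((n : ℝ) + 1) * (|s - u k| + |t - u k|) := by ring
    have hlim : Tendsto (fun k => ((n : ℝ) + 1) * (|s - u k| + |t - u k|)) atTop
        (𝓝 (((n : ℝ) + 1) * (|s - t| + 0))) := (h1.add h2).const_mul _
    have := ge_of_tendsto hlim hev
    rwa [add_zero] at this
  have cover : ∀ t ∈ B, ∃ n k, t ∈ E n k := by
    intro t ht
    obtain ⟨C, δ, hδ, hCd⟩ := hg t ht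
    obtain ⟨n, hn⟩ := exists_nat_ge (max C (1 / δ))
    have hCn : C ≤ (n : ℝ) + 1 := ((le_max_left _ _).trans hn).trans (by linarith)
    have hδn : 1 / ((n : ℝ) + 1) ≤ δ := by
      rw [div_le_iff₀ (hn1 n)]
      have h1 : 1 / δ ≤ (n : ℝ) + 1 := ((le_max_right _ _).trans hn).trans (by linarith)
      rw [div_le_iff₀ hδ] at h1
      linarith
    have htD : t ∈ D n := by
      intro s hs
      have hsδ : |s - t| < δ := lt_of_lt_of_le hs hδn
      exact (hCd s hsδ).trans (mul_le_mul_of_nonneg_right hCn (abs_nonneg _))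
    refine ⟨n, ⌊t / c n⌋, htD, ?_, ?_⟩
    · have h1 : (⌊t / c n⌋ : ℝ) ≤ t / c n := Int.floor_le _
      exact (le_div_iff₀ (hcpos n)).1 h1
    · have h2 : t / c n ≤ (⌊t / c n⌋ : ℝ) + 1 := (Int.lt_floor_add_one _).le
      exact (div_le_iff₀ (hcpos n)).1 h2
  have piece0 : ∀ (n : ℕ) (k : ℤ),
      volume {t | t ∈ E n k ∧ ¬ DifferentiableAt ℝ g t} = 0 := by
    intro n k
    apply my_piece hRNP g (C := (n : ℝ) + 1) (ε := 1 / ((n : ℝ) + 1))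
      (by positivity) (by positivity)
      ((hDclosed n).inter isClosed_Icc)
      ⟨(k : ℝ) * c n, fun x hx => hx.2.1⟩
      ⟨((k : ℝ) + 1) * c n, fun x hx => hx.2.2⟩
    · intro t htE s hs
      exact htE.1 s hs
    · intro x hx y hy
      rcases eq_or_ne x y with rfl | hxy
      · simp
      have hcc : ((k : ℝ) + 1) * c n - (k : ℝ) * c n = c n := by ring
      have hxy' : |x - y| ≤ c n := by
        rw [abs_sub_le_iff]
        obtain ⟨-, hx1, hx2⟩ := hx
        obtain ⟨-, hy1, hy2⟩ := hy
        constructor <;> linarith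
      have hclt : c n < 1 / ((n : ℝ) + 1) := by
        rw [hc]
        rw [div_lt_div_iff₀ (by positivity) (hn1 n)]
        nlinarith [hn1 n]
      exact hy.1 x (lt_of_le_of_lt hxy' hclt)
  have hsub : {t : ℝ | t ∈ B ∧ ¬ DifferentiableAt ℝ g t} ⊆
      ⋃ (n : ℕ) (k : ℤ), {t | t ∈ E n k ∧ ¬ DifferentiableAt ℝ g t} := by
    rintro t ⟨htB, htd⟩
    obtain ⟨n, k, hnk⟩ := cover t htB
    exact mem_iUnion.2 ⟨n, mem_iUnion.2 ⟨k, hnk, htd⟩⟩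
  exact measure_mono_null hsub
    (measure_iUnion_null fun n => measure_iUnion_null fun k => piece0 n k)
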